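/- Let G be a k-uniform hypergraph with a vertex u of maximum degree Δ ≥ 1, let v be a neighbor of u of maximum degree δ among neighbors of u, and let γ be the number of edges containing both u and v. Then ρ(G) ≥ ((Δ + δ − 2γ + γ² + √((Δ−δ)² + γ⁴ + 2(Δ+δ−2γ)γ²))/2)^{1/k}. -/

import Mathlib

open Finset

/-- The spectral radius of an order-`k` tensor of dimension `n`: the largest modulus of its
(complex) eigenvalues, where `ρ` is an eigenvalue if `T x = ρ x^{[k-1]}` for some `x ≠ 0`. -/
noncomputable def specRad (n k : ℕ) (T : Fin n → (Fin (k-1) → Fin n) → ℝ) : ℝ :=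
  sSup {r : ℝ | ∃ ρ : ℂ, ‖ρ‖ = r ∧ ∃ x : Fin n → ℂ, x ≠ 0 ∧
    ∀ i, (∑ f : Fin (k-1) → Fin n, (T i f : ℂ) * ∏ a, x (f a)) = ρ * x i ^ (k-1)}

/-- A hypergraph on vertex set `Fin n` is a finite set of edges; `hDeg` is the degree of
vertex `i`, the number of edges containing `i`. -/
def hDeg (n : ℕ) (E : Finset (Finset (Fin n))) (i : Fin n) : ℕ :=
  (E.filter (fun e => i ∈ e)).card

/-- The average 2-degree of vertex `i` in a `k`-uniform hypergraph:
`m_i = (Σ_{{i,i₂,…,i_k} ∈ E_i} d_{i₂} ⋯ d_{i_k}) / d_i^{k-1}`. -/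
noncomputable def avg2 (n k : ℕ) (E : Finset (Finset (Fin n))) (i : Fin n) : ℝ :=
  (∑ e ∈ E.filter (fun e => i ∈ e), ∏ j ∈ e.erase i, (hDeg n E j : ℝ)) /
    (hDeg n E i : ℝ) ^ (k-1)

/-- The adjacency tensor of a `k`-uniform hypergraph: entry `1/(k-1)!` at `(i₁,…,i_k)` when
`{i₁,…,i_k}` is an edge, and `0` otherwise. -/
noncomputable def adjT (n k : ℕ) (E : Finset (Finset (Fin n))) :
    Fin n → (Fin (k-1) → Fin n) → ℝ :=
  fun i f => if insert i (Finset.image f Finset.univ) ∈ E then 1 / (k-1).factorial else 0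

/-- The signless Laplacian tensor `Q(G) = D(G) + A(G)`. -/
noncomputable def qT (n k : ℕ) (E : Finset (Finset (Fin n))) :
    Fin n → (Fin (k-1) → Fin n) → ℝ :=
  fun i f => (if ∀ a, f a = i then (hDeg n E i : ℝ) else 0) + adjT n k E i f

/-- A hypergraph is connected if every pair of distinct vertices is joined by a sequence of
pairwise intersecting edges. -/
def HConn (n : ℕ) (E : Finset (Finset (Fin n))) : Prop :=
  ∀ u v : Fin n, u ≠ v → ∃ r : ℕ, ∃ es : Fin (r+1) → Finset (Fin n),
    (∀ s, es s ∈ E) ∧ u ∈ es 0 ∧ v ∈ es (Fin.last r) ∧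
    ∀ s : Fin r, (es s.castSucc ∩ es s.succ).Nonempty

/-! ### Auxiliary machinery -/

variable {n k : ℕ}

/-- Polynomial form `F(x) = Σ_{e∈E} Π_{j∈e} x_j`. -/
noncomputable def FFh (E : Finset (Finset (Fin n))) (x : Fin n → ℝ) : ℝ :=
  ∑ e ∈ E, ∏ j ∈ e, x j

/-- `S_i(x) = Σ_{e∋i} Π_{j∈e\i} x_j`. -/
noncomputable def SSh (E : Finset (Finset (Fin n))) (i : Fin n) (x : Fin n → ℝ) : ℝ :=
  ∑ e ∈ E.filter (fun e => i ∈ e), ∏ j ∈ e.erase i, x j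

lemma FFh_nonneg {E : Finset (Finset (Fin n))} {x : Fin n → ℝ} (hx : ∀ i, 0 ≤ x i) :
    0 ≤ FFh E x :=
  Finset.sum_nonneg fun e _ => Finset.prod_nonneg fun j _ => hx j

lemma SSh_nonneg {E : Finset (Finset (Fin n))} {x : Fin n → ℝ} (hx : ∀ i, 0 ≤ x i) (i : Fin n) :
    0 ≤ SSh E i x :=
  Finset.sum_nonneg fun e _ => Finset.prod_nonneg fun j _ => hx j

lemma FFh_update (E : Finset (Finset (Fin n))) (x : Fin n → ℝ) (i : Fin n) (t : ℝ) :
    FFh E (Function.update x i t) = FFh E x + (t - x i) * SSh E i x := by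
  classical
  have h1 : ∀ e ∈ E.filter (fun e => i ∈ e),
      ∏ j ∈ e, Function.update x i t j = t * ∏ j ∈ e.erase i, x j := by
    intro e he
    rw [Finset.mem_filter] at he
    rw [← Finset.mul_prod_erase _ _ he.2, Function.update_self]
    congr 1
    exact Finset.prod_congr rfl fun j hj =>
      Function.update_of_ne (Finset.ne_of_mem_erase hj) _ _
  have h2 : ∀ e ∈ E.filter (fun e => i ∉ e),
      ∏ j ∈ e, Function.update x i t j = ∏ j ∈ e, x j := by
    intro e he
    rw [Finset.mem_filter] at he
    exact Finset.prod_congr rfl fun j hj =>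
      Function.update_of_ne (by rintro rfl; exact he.2 hj) _ _
  have h3 : ∀ e ∈ E.filter (fun e => i ∈ e),
      ∏ j ∈ e, x j = x i * ∏ j ∈ e.erase i, x j := by
    intro e he
    rw [Finset.mem_filter] at he
    rw [← Finset.mul_prod_erase _ _ he.2]
  rw [FFh, FFh, ← Finset.sum_filter_add_sum_filter_not E (fun e => i ∈ e),
    ← Finset.sum_filter_add_sum_filter_not E (fun e => i ∈ e)
      (fun e => ∏ j ∈ e, x j)]
  rw [Finset.sum_congr rfl h1, Finset.sum_congr rfl h2, Finset.sum_congr rfl h3]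
  rw [← Finset.mul_sum, ← Finset.mul_sum]
  rw [SSh]
  ring

lemma FFh_smul (E : Finset (Finset (Fin n))) (hcard : ∀ e ∈ E, e.card = k)
    (c : ℝ) (x : Fin n → ℝ) : FFh E (fun i => c * x i) = c ^ k * FFh E x := by
  rw [FFh, FFh, Finset.mul_sum]
  refine Finset.sum_congr rfl fun e he => ?_
  rw [Finset.prod_mul_distrib, Finset.prod_const, hcard e he]

lemma exists_maximizer (hk : 1 ≤ k) (hn : 1 ≤ n) (E : Finset (Finset (Fin n)))
    (hcard : ∀ e ∈ E, e.card = k) :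
    ∃ x : Fin n → ℝ, (∀ i, 0 ≤ x i) ∧ (∑ i, x i ^ k = 1) ∧
      ∀ y : Fin n → ℝ, (∀ i, 0 ≤ y i) → FFh E y ≤ FFh E x * ∑ i, y i ^ k := by
  classical
  set K : Set (Fin n → ℝ) := {x | (∀ i, 0 ≤ x i) ∧ ∑ i, x i ^ k = 1} with hK
  have hKc : IsCompact K := by
    have hsub : K ⊆ Set.Icc (fun _ => (0:ℝ)) (fun _ => (1:ℝ)) := by
      intro x hx
      constructor
      · intro i; exact hx.1 i
      · intro i
        by_contra h
        push_neg at h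
        have h1 : (1:ℝ) < x i ^ k := by
          calc (1:ℝ) = 1 ^ k := (one_pow k).symm
          _ < x i ^ k := by
            apply pow_lt_pow_left₀ h (by norm_num)
            omega
        have h2 : x i ^ k ≤ ∑ j, x j ^ k := by
          apply Finset.single_le_sum (fun j _ => pow_nonneg (hx.1 j) k) (Finset.mem_univ i)
        rw [hx.2] at h2; linarith
    have hcl : IsClosed K := by
      have h1 : IsClosed {x : Fin n → ℝ | ∀ i, 0 ≤ x i} := by
        have : {x : Fin n → ℝ | ∀ i, 0 ≤ x i} = ⋂ i, {x : Fin n → ℝ | 0 ≤ x i} := by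
          ext x; simp
        rw [this]
        exact isClosed_iInter fun i => isClosed_le continuous_const (continuous_apply i)
      have h2 : IsClosed {x : Fin n → ℝ | ∑ i, x i ^ k = 1} :=
        isClosed_eq (continuous_finset_sum _ fun i _ => (continuous_apply i).pow k)
          continuous_const
      exact h1.inter h2
    exact (isCompact_Icc).of_isClosed_subset hcl hsub
  have hKne : K.Nonempty := by
    refine ⟨fun i => if i = ⟨0, hn⟩ then 1 else 0, fun i => by positivity, ?_⟩
    rw [Finset.sum_eq_single ⟨0, hn⟩]
    · simp
    · intro j _ hj; simp [hj]; omega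
    · intro h; exact absurd (Finset.mem_univ _) h
  have hcont : Continuous (FFh E) := by
    apply continuous_finset_sum
    intro e _
    exact continuous_finset_prod _ fun j _ => continuous_apply j
  obtain ⟨x, hxK, hmax⟩ := hKc.exists_isMaxOn hKne hcont.continuousOn
  refine ⟨x, hxK.1, hxK.2, ?_⟩
  intro y hy
  by_cases hs : ∑ i, y i ^ k = 0
  · have hy0 : ∀ i, y i = 0 := by
      intro i
      have := (Finset.sum_eq_zero_iff_of_nonneg
        (fun j _ => pow_nonneg (hy j) k)).1 hs i (Finset.mem_univ i)
      exact pow_eq_zero_iff (by omega) |>.1 this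
    have : FFh E y ≤ 0 := by
      rw [FFh]
      apply le_of_eq
      apply Finset.sum_eq_zero
      intro e he
      have : e.Nonempty := by
        rw [← Finset.card_pos, hcard e he]; omega
      obtain ⟨j, hj⟩ := this
      exact Finset.prod_eq_zero hj (hy0 j)
    calc FFh E y ≤ 0 := this
    _ = FFh E x * 0 := by ring
    _ = FFh E x * ∑ i, y i ^ k := by rw [hs]
  · have hs' : 0 < ∑ i, y i ^ k :=
      lt_of_le_of_ne (Finset.sum_nonneg fun j _ => pow_nonneg (hy j) k) (Ne.symm hs)
    set s := ∑ i, y i ^ k with hsdef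
    set c : ℝ := s ^ (-(1:ℝ)/k) with hc
    have hcpos : 0 < c := Real.rpow_pos_of_pos hs' _
    have hck : c ^ k = s⁻¹ := by
      rw [hc, ← Real.rpow_natCast (s ^ (-(1:ℝ)/k)) k, ← Real.rpow_mul hs'.le]
      rw [div_mul_cancel₀]
      · exact Real.rpow_neg_one s
      · exact_mod_cast (by omega : k ≠ 0)
    have hzK : (fun i => c * y i) ∈ K := by
      constructor
      · intro i; exact mul_nonneg hcpos.le (hy i)
      · have : ∑ i, (c * y i) ^ k = c ^ k * s := by
          rw [hsdef, Finset.mul_sum]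
          exact Finset.sum_congr rfl fun i _ => mul_pow c (y i) k
        rw [this, hck, inv_mul_cancel₀ hs]
    have h1 : FFh E (fun i => c * y i) ≤ FFh E x := hmax hzK
    rw [FFh_smul E hcard, hck] at h1
    calc FFh E y = s * (s⁻¹ * FFh E y) := by field_simp
    _ ≤ s * FFh E x := by
        apply mul_le_mul_of_nonneg_left h1 hs'.le
    _ = FFh E x * s := by ring

lemma eigen_of_max (hk : 2 ≤ k) (E : Finset (Finset (Fin n)))
    (x : Fin n → ℝ) (hx : ∀ i, 0 ≤ x i) (hnorm : ∑ i, x i ^ k = 1)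
    (hmax : ∀ y : Fin n → ℝ, (∀ i, 0 ≤ y i) → FFh E y ≤ FFh E x * ∑ i, y i ^ k)
    (i : Fin n) : SSh E i x = (k * FFh E x) * x i ^ (k-1) := by
  classical
  set M := FFh E x with hM
  set S := SSh E i x with hS
  have hM0 : 0 ≤ M := FFh_nonneg hx
  have key : ∀ t : ℝ, 0 ≤ t → (t - x i) * S ≤ M * (t ^ k - x i ^ k) := by
    intro t ht
    have h1 := hmax (Function.update x i t) (fun j => by
      rcases eq_or_ne j i with rfl | hj
      · rwa [Function.update_self]
      · rw [Function.update_of_ne hj]; exact hx j)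
    rw [FFh_update] at h1
    have h2 : ∑ j, Function.update x i t j ^ k = 1 + t ^ k - x i ^ k := by
      rw [← hnorm]
      rw [← Finset.add_sum_erase _ (fun j => Function.update x i t j ^ k) (Finset.mem_univ i),
        ← Finset.add_sum_erase _ (fun j => x j ^ k) (Finset.mem_univ i)]
      have he : ∑ j ∈ Finset.univ.erase i, Function.update x i t j ^ k
          = ∑ j ∈ Finset.univ.erase i, x j ^ k :=
        Finset.sum_congr rfl fun j hj => by
          rw [Function.update_of_ne (Finset.ne_of_mem_erase hj)]
      rw [he, Function.update_self]
      ring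
    rw [h2] at h1
    nlinarith [h1]
  by_cases hxi : x i = 0
  · have hS0 : 0 ≤ S := SSh_nonneg hx i
    have hSle : S ≤ 0 := by
      by_contra h
      push_neg at h
      set t := min 1 (S / (2*(M+1))) with htdef
      have hMpos : (0:ℝ) < M + 1 := by linarith
      have ht0 : 0 < t := lt_min one_pos (div_pos h (by linarith))
      have ht1 : t ≤ 1 := min_le_left _ _
      have h1 := key t ht0.le
      rw [hxi] at h1
      have hz : (0:ℝ) ^ k = 0 := zero_pow (by omega)
      rw [hz] at h1
      have htk : t ^ k ≤ t ^ 2 := by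
        apply pow_le_pow_of_le_one ht0.le ht1 hk
      have : t * S ≤ (M + 1) * t ^ 2 := by
        nlinarith [sq_nonneg t]
      have hts : S ≤ (M + 1) * t := by
        rw [pow_two] at this
        have := (mul_le_mul_iff_right₀ ht0).1 (by nlinarith : t * S ≤ t * ((M+1) * t))
        linarith
      have : (M+1) * t ≤ S / 2 := by
        calc (M+1) * t ≤ (M+1) * (S / (2*(M+1))) := by
              exact mul_le_mul_of_nonneg_left (min_le_right _ _) hMpos.le
        _ = S / 2 := by field_simp
      linarith
    have : S = 0 := le_antisymm hSle hS0
    rw [this, hxi, zero_pow (by omega : k - 1 ≠ 0), mul_zero]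
  · have hxipos : 0 < x i := lt_of_le_of_ne (hx i) (Ne.symm hxi)
    set h : ℝ → ℝ := fun t => M * t ^ k - S * t with hh
    have hmin : IsLocalMin h (x i) := by
      have : ∀ᶠ t in nhds (x i), h (x i) ≤ h t := by
        filter_upwards [Ioi_mem_nhds hxipos] with t ht
        have := key t (le_of_lt ht)
        simp only [hh]
        nlinarith
      exact this
    have hderiv : HasDerivAt h (M * (k * x i ^ (k-1)) - S) (x i) := by
      have d1 : HasDerivAt (fun t : ℝ => t ^ k) (k * x i ^ (k-1)) (x i) := hasDerivAt_pow k (x i)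
      have d2 : HasDerivAt (fun t : ℝ => M * t ^ k) (M * (k * x i ^ (k-1))) (x i) := d1.const_mul M
      have d3 : HasDerivAt (fun t : ℝ => S * t) S (x i) := by
        simpa using (hasDerivAt_id (x i)).const_mul S
      exact d2.sub d3
    have := hmin.hasDerivAt_eq_zero hderiv
    linarith [this]

lemma card_fiber {m : ℕ} (s : Finset (Fin n)) (hs : s.card = m) :
    (Finset.univ.filter (fun f : Fin m → Fin n => Finset.image f Finset.univ = s)).card
      = m.factorial := by
  classical
  rw [← Fintype.card_subtype]
  have hcards : Fintype.card {x // x ∈ s} = m := by rw [Fintype.card_coe, hs]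
  have e1 : {f : Fin m → Fin n // Finset.image f Finset.univ = s} ≃ (Fin m ≃ {x // x ∈ s}) := by
    refine ⟨?_, ?_, ?_, ?_⟩
    · rintro ⟨f, hf⟩
      have hcardim : (Finset.univ.image f).card = (Finset.univ : Finset (Fin m)).card := by
        rw [hf, hs, Finset.card_univ, Fintype.card_fin]
      have hinjOn := Finset.injOn_of_card_image_eq hcardim
      have hinj : Function.Injective f := fun a b h =>
        hinjOn (by simp) (by simp) h
      refine Equiv.ofBijective (fun a => ⟨f a, by
        rw [← hf]; exact Finset.mem_image_of_mem f (Finset.mem_univ a)⟩) ?_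
      rw [Fintype.bijective_iff_injective_and_card]
      refine ⟨fun a b hab => hinj (congrArg Subtype.val hab), ?_⟩
      rw [hcards, Fintype.card_fin]
    · intro σ
      refine ⟨fun a => (σ a : Fin n), ?_⟩
      apply Finset.ext; intro j
      simp only [Finset.mem_image, Finset.mem_univ, true_and]
      constructor
      · rintro ⟨a, rfl⟩; exact (σ a).2
      · intro hj; exact ⟨σ.symm ⟨j, hj⟩, by simp⟩
    · rintro ⟨f, hf⟩
      apply Subtype.ext; funext a; rfl
    · intro σ
      apply Equiv.ext; intro a; apply Subtype.ext; rfl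
  rw [Fintype.card_congr e1,
    Fintype.card_equiv (Fintype.equivOfCardEq (by rw [Fintype.card_fin, hcards]))]
  rw [Fintype.card_fin]

lemma adjT_sum_eq (hk : 2 ≤ k) (E : Finset (Finset (Fin n)))
    (hcard : ∀ e ∈ E, e.card = k) (i : Fin n) (y : Fin n → ℝ) :
    ∑ f : Fin (k-1) → Fin n, adjT n k E i f * ∏ a, y (f a) = SSh E i y := by
  classical
  have fiber_eq : ∀ e ∈ E.filter (fun e => i ∈ e),
      ∀ f : Fin (k-1) → Fin n,
        (insert i (Finset.image f Finset.univ) = e ↔ Finset.image f Finset.univ = e.erase i) := by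
    intro e he f
    rw [Finset.mem_filter] at he
    constructor
    · intro h
      have hni : i ∉ Finset.image f Finset.univ := by
        intro hi
        have : insert i (Finset.image f Finset.univ) = Finset.image f Finset.univ :=
          Finset.insert_eq_self.2 hi
        rw [this] at h
        have h1 : (Finset.image f Finset.univ).card ≤ k - 1 :=
          le_trans Finset.card_image_le (by simp)
        rw [h, hcard e he.1] at h1
        omega
      rw [← h, Finset.erase_insert hni]
    · intro h
      rw [h, Finset.insert_erase he.2]
  have lhs_eq : ∑ f : Fin (k-1) → Fin n, adjT n k E i f * ∏ a, y (f a)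
      = ∑ f ∈ Finset.univ.filter
          (fun f : Fin (k-1) → Fin n => insert i (Finset.image f Finset.univ) ∈ E ∧
            i ∈ insert i (Finset.image f Finset.univ)),
          (1 / ((k-1).factorial : ℝ)) * ∏ a, y (f a) := by
    rw [Finset.sum_filter]
    refine Finset.sum_congr rfl fun f _ => ?_
    rw [adjT]
    by_cases h : insert i (Finset.image f Finset.univ) ∈ E
    · simp [h, Finset.mem_insert_self]
    · simp [h]
  rw [lhs_eq]
  rw [← Finset.sum_fiberwise_of_maps_to (g := fun f => insert i (Finset.image f Finset.univ))
    (t := E.filter (fun e => i ∈ e))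
    (fun f hf => by
      rw [Finset.mem_filter] at hf
      exact Finset.mem_filter.2 ⟨hf.2.1, hf.2.2⟩)]
  rw [SSh]
  refine Finset.sum_congr rfl fun e he => ?_
  have hie : i ∈ e := (Finset.mem_filter.1 he).2
  have heE : e ∈ E := (Finset.mem_filter.1 he).1
  have hfib : (Finset.univ.filter
      (fun f : Fin (k-1) → Fin n => insert i (Finset.image f Finset.univ) ∈ E ∧
        i ∈ insert i (Finset.image f Finset.univ))).filter
      (fun f => insert i (Finset.image f Finset.univ) = e)
      = Finset.univ.filter (fun f : Fin (k-1) → Fin n =>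
          Finset.image f Finset.univ = e.erase i) := by
    apply Finset.ext; intro f
    simp only [Finset.mem_filter, Finset.mem_univ, true_and]
    constructor
    · rintro ⟨⟨h1, h2⟩, h3⟩
      exact (fiber_eq e he f).1 h3
    · intro h
      have h2 := (fiber_eq e he f).2 h
      rw [h2]
      exact ⟨⟨heE, hie⟩, rfl⟩
  rw [hfib]
  have hprod : ∀ f ∈ Finset.univ.filter (fun f : Fin (k-1) → Fin n =>
      Finset.image f Finset.univ = e.erase i),
      (1 / ((k-1).factorial : ℝ)) * ∏ a, y (f a)
        = (1 / ((k-1).factorial : ℝ)) * ∏ j ∈ e.erase i, y j := by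
    intro f hf
    rw [Finset.mem_filter] at hf
    congr 1
    rw [← hf.2]
    rw [Finset.prod_image]
    intro a _ b _ hab
    have hcardim : (Finset.univ.image f).card = (Finset.univ : Finset (Fin (k-1))).card := by
      rw [hf.2, Finset.card_erase_of_mem hie, hcard e heE, Finset.card_univ, Fintype.card_fin]
    exact Finset.injOn_of_card_image_eq hcardim (by simp) (by simp) hab
  rw [Finset.sum_congr rfl hprod, Finset.sum_const]
  rw [card_fiber (e.erase i) (by rw [Finset.card_erase_of_mem hie, hcard e heE])]
  rw [nsmul_eq_mul]
  have : ((k-1).factorial : ℝ) ≠ 0 := Nat.cast_ne_zero.2 (Nat.factorial_ne_zero _)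
  field_simp

lemma specRad_bddAbove (E : Finset (Finset (Fin n))) :
    BddAbove {r : ℝ | ∃ ρ : ℂ, ‖ρ‖ = r ∧ ∃ x : Fin n → ℂ, x ≠ 0 ∧
      ∀ i, (∑ f : Fin (k-1) → Fin n, (adjT n k E i f : ℂ) * ∏ a, x (f a)) = ρ * x i ^ (k-1)} := by
  classical
  refine ⟨(n : ℝ) ^ (k-1), ?_⟩
  rintro r ⟨ρ, hρ, x, hx0, heq⟩
  obtain ⟨i, -, hmaxi⟩ := Finset.exists_max_image (Finset.univ : Finset (Fin n))
    (fun j => ‖x j‖) (by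
      obtain ⟨j, hj⟩ := Function.ne_iff.1 hx0
      exact ⟨j, Finset.mem_univ j⟩)
  obtain ⟨j₀, hj₀⟩ := Function.ne_iff.1 hx0
  have hxipos : 0 < ‖x i‖ :=
    lt_of_lt_of_le (norm_pos_iff.2 hj₀) (hmaxi j₀ (Finset.mem_univ j₀))
  have hTnonneg : ∀ f : Fin (k-1) → Fin n, 0 ≤ adjT n k E i f := by
    intro f; rw [adjT]; positivity
  have hTle1 : ∀ f : Fin (k-1) → Fin n, adjT n k E i f ≤ 1 := by
    intro f; rw [adjT]
    split
    · rw [div_le_one (by positivity)]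
      exact_mod_cast Nat.one_le_iff_ne_zero.2 (Nat.factorial_ne_zero _)
    · norm_num
  have key : ‖ρ‖ * ‖x i‖ ^ (k-1)
      ≤ (n:ℝ)^(k-1) * ‖x i‖ ^ (k-1) := by
    have h1 : ‖ρ * x i ^ (k-1)‖ = ‖ρ‖ * ‖x i‖ ^ (k-1) := by
      rw [norm_mul, norm_pow]
    rw [← h1, ← heq i]
    calc ‖∑ f : Fin (k-1) → Fin n, (adjT n k E i f : ℂ) * ∏ a, x (f a)‖
        ≤ ∑ f : Fin (k-1) → Fin n, ‖(adjT n k E i f : ℂ) * ∏ a, x (f a)‖ :=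
          norm_sum_le _ _
      _ ≤ ∑ _f : Fin (k-1) → Fin n, ‖x i‖ ^ (k-1) := by
          apply Finset.sum_le_sum
          intro f _
          rw [norm_mul, Complex.norm_real, Real.norm_eq_abs, norm_prod]
          calc |adjT n k E i f| * ∏ a, ‖x (f a)‖
              ≤ 1 * ∏ a, ‖x (f a)‖ := by
                apply mul_le_mul_of_nonneg_right
                · rw [abs_of_nonneg (hTnonneg f)]; exact hTle1 f
                · exact Finset.prod_nonneg fun a _ => norm_nonneg _
            _ = ∏ a, ‖x (f a)‖ := one_mul _
            _ ≤ ∏ _a : Fin (k-1), ‖x i‖ := by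
                apply Finset.prod_le_prod
                · intro a _; exact norm_nonneg _
                · intro a _; exact hmaxi (f a) (Finset.mem_univ _)
            _ = ‖x i‖ ^ (k-1) := by
                rw [Finset.prod_const, Finset.card_univ, Fintype.card_fin]
      _ = (↑(Fintype.card (Fin (k-1) → Fin n)) : ℝ) * ‖x i‖ ^ (k-1) := by
          rw [Finset.sum_const, Finset.card_univ, nsmul_eq_mul]
      _ ≤ (n:ℝ)^(k-1) * ‖x i‖ ^ (k-1) := by
          apply mul_le_mul_of_nonneg_right _ (by positivity)
          rw [Fintype.card_fun, Fintype.card_fin, Fintype.card_fin]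
          norm_cast
  rw [← hρ]
  exact le_of_mul_le_mul_right key (pow_pos hxipos (k-1))

lemma max_le_specRad (hk : 2 ≤ k) (E : Finset (Finset (Fin n)))
    (hcard : ∀ e ∈ E, e.card = k)
    (x : Fin n → ℝ) (hx : ∀ i, 0 ≤ x i) (hnorm : ∑ i, x i ^ k = 1)
    (hmax : ∀ y : Fin n → ℝ, (∀ i, 0 ≤ y i) → FFh E y ≤ FFh E x * ∑ i, y i ^ k) :
    (k : ℝ) * FFh E x ≤ specRad n k (adjT n k E) := by
  classical
  set lam : ℝ := (k : ℝ) * FFh E x with hlam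
  have hlam0 : 0 ≤ lam := mul_nonneg (by positivity) (FFh_nonneg hx)
  apply le_csSup (specRad_bddAbove E)
  refine ⟨(lam : ℂ), by rw [Complex.norm_real, Real.norm_eq_abs, abs_of_nonneg hlam0], fun i => (x i : ℂ), ?_, ?_⟩
  · have : ∃ i, x i ≠ 0 := by
      by_contra h
      push_neg at h
      rw [Finset.sum_congr rfl (fun i _ => by rw [h i, zero_pow (by omega : k ≠ 0)])] at hnorm
      simp at hnorm
    obtain ⟨i, hi⟩ := this
    intro h
    apply hi
    have h2 := congrFun h i
    simpa using h2
  · intro i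
    have hre : ∑ f : Fin (k-1) → Fin n, adjT n k E i f * ∏ a, x (f a)
        = lam * x i ^ (k-1) := by
      rw [adjT_sum_eq hk E hcard i x, eigen_of_max hk E x hx hnorm hmax i]
    calc (∑ f : Fin (k-1) → Fin n, (adjT n k E i f : ℂ) * ∏ a, ((x (f a) : ℝ) : ℂ))
        = ((∑ f : Fin (k-1) → Fin n, adjT n k E i f * ∏ a, x (f a) : ℝ) : ℂ) := by
          norm_cast
      _ = ((lam * x i ^ (k-1) : ℝ) : ℂ) := by rw [hre]
      _ = (lam : ℂ) * ((x i : ℝ) : ℂ) ^ (k-1) := by push_cast; ring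

lemma maximizer_pos (hk : 2 ≤ k) (EH : Finset (Finset (Fin n)))
    (hcardH : ∀ e ∈ EH, e.card = k)
    (x : Fin n → ℝ) (hx : ∀ i, 0 ≤ x i) (hnorm : ∑ i, x i ^ k = 1)
    (hmax : ∀ y : Fin n → ℝ, (∀ i, 0 ≤ y i) → FFh EH y ≤ FFh EH x * ∑ i, y i ^ k)
    (u v : Fin n) (he₂ : ∃ e ∈ EH, u ∈ e ∧ v ∈ e)
    (hcover : ∀ e ∈ EH, u ∈ e ∨ v ∈ e) (hMpos : 0 < FFh EH x) :
    ∀ w : Fin n, ∀ e ∈ EH, w ∈ e → 0 < x w := by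
  classical
  obtain ⟨e₁, he₁, he₁pos⟩ : ∃ e₁ ∈ EH, 0 < ∏ j ∈ e₁, x j := by
    by_contra h
    push_neg at h
    have : FFh EH x ≤ 0 := Finset.sum_nonpos fun e he => h e he
    linarith
  have he₁all : ∀ j ∈ e₁, 0 < x j := by
    intro j hj
    rcases lt_or_eq_of_le (hx j) with h | h
    · exact h
    · exfalso
      rw [Finset.prod_eq_zero hj h.symm] at he₁pos
      exact lt_irrefl _ he₁pos
  intro w e he hwe
  rcases lt_or_eq_of_le (hx w) with h | h
  · exact h
  exfalso
  have hxw : x w = 0 := h.symm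
  obtain ⟨estar, hestar, ⟨jp, hjp, hjppos⟩, ⟨jz, hjz, hjzzero⟩⟩ :
      ∃ e' ∈ EH, (∃ j ∈ e', 0 < x j) ∧ (∃ j ∈ e', x j = 0) := by
    by_cases hcase : ∃ j ∈ e, 0 < x j
    · exact ⟨e, he, hcase, ⟨w, hwe, hxw⟩⟩
    · push_neg at hcase
      have hzero : ∀ j ∈ e, x j = 0 := fun j hj => le_antisymm (hcase j hj) (hx j)
      obtain ⟨e₂, he₂H, hue₂, hve₂⟩ := he₂
      rcases hcover e₁ he₁ with h1 | h1
      · have hxu : 0 < x u := he₁all u h1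
        have hve : v ∈ e := by
          rcases hcover e he with h2 | h2
          · exact absurd (hzero u h2) (ne_of_gt hxu)
          · exact h2
        exact ⟨e₂, he₂H, ⟨u, hue₂, hxu⟩, ⟨v, hve₂, hzero v hve⟩⟩
      · have hxv : 0 < x v := he₁all v h1
        have hue : u ∈ e := by
          rcases hcover e he with h2 | h2
          · exact h2
          · exact absurd (hzero v h2) (ne_of_gt hxv)
        exact ⟨e₂, he₂H, ⟨v, hve₂, hxv⟩, ⟨u, hue₂, hzero u hue⟩⟩
  set Z := estar.filter (fun j => x j = 0) with hZ
  set p := Z.card with hp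
  have hjzZ : jz ∈ Z := Finset.mem_filter.2 ⟨hjz, hjzzero⟩
  have hjpZ : jp ∉ Z := fun hmem => (ne_of_gt hjppos) (Finset.mem_filter.1 hmem).2
  have hp1 : 1 ≤ p := Finset.card_pos.2 ⟨jz, hjzZ⟩
  have hpk : p + 1 ≤ k := by
    have h1 : Z ⊆ estar := Finset.filter_subset _ _
    have h2 : Z ⊂ estar := Finset.ssubset_iff_of_subset h1 |>.2 ⟨jp, hjp, hjpZ⟩
    have := Finset.card_lt_card h2
    rw [hcardH estar hestar] at this
    omega
  set C := ∏ j ∈ estar \ Z, x j with hC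
  have hCpos : 0 < C := by
    apply Finset.prod_pos
    intro j hj
    rw [Finset.mem_sdiff] at hj
    rcases lt_or_eq_of_le (hx j) with h | h
    · exact h
    · exact absurd (Finset.mem_filter.2 ⟨hj.1, h.symm⟩) hj.2
  set M := FFh EH x with hM
  have hMp : 0 < M * p + 1 := add_pos_of_nonneg_of_pos (mul_nonneg hMpos.le (Nat.cast_nonneg _)) one_pos
  set ε := min 1 (C / (2 * (M * p + 1))) with hε
  have hε0 : 0 < ε := lt_min one_pos (div_pos hCpos (by linarith))
  have hε1 : ε ≤ 1 := min_le_left _ _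
  set y : Fin n → ℝ := fun j => if j ∈ Z then ε else x j with hy
  have hynn : ∀ j, 0 ≤ y j := by
    intro j; rw [hy]; dsimp only
    split
    · exact hε0.le
    · exact hx j
  have hyx : ∀ j, x j ≤ y j := by
    intro j; rw [hy]; dsimp only
    split
    · rename_i hmem
      rw [(Finset.mem_filter.1 hmem).2]
      exact hε0.le
    · exact le_refl _
  have hFy : FFh EH x + ε ^ p * C ≤ FFh EH y := by
    have hterm : ∀ e' ∈ EH, ∏ j ∈ e', x j ≤ ∏ j ∈ e', y j :=
      fun e' _ => Finset.prod_le_prod (fun j _ => hx j) (fun j _ => hyx j)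
    have hstar : ∏ j ∈ estar, y j = ε ^ p * C := by
      rw [← Finset.prod_sdiff (Finset.filter_subset (fun j => x j = 0) estar)]
      have h1 : ∏ j ∈ Z, y j = ε ^ p := by
        have hc : ∀ j ∈ Z, y j = ε := fun j hj => by simp only [hy, if_pos hj]
        rw [Finset.prod_congr rfl hc, Finset.prod_const, hp]
      have h2 : ∏ j ∈ estar \ Z, y j = C := by
        rw [hC]
        refine Finset.prod_congr rfl fun j hj => ?_
        rw [hy]; dsimp only
        rw [if_neg (Finset.mem_sdiff.1 hj).2]
      rw [h1, h2, mul_comm]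
    have hstarx : ∏ j ∈ estar, x j = 0 := Finset.prod_eq_zero hjz hjzzero
    calc FFh EH x + ε ^ p * C
        = ∑ e' ∈ EH.erase estar, ∏ j ∈ e', x j + (∏ j ∈ estar, x j + ε ^ p * C) := by
          rw [FFh, ← Finset.add_sum_erase _ _ hestar]; ring
      _ ≤ ∑ e' ∈ EH.erase estar, ∏ j ∈ e', y j + ∏ j ∈ estar, y j := by
          apply add_le_add
          · exact Finset.sum_le_sum fun e' he' => hterm e' (Finset.mem_of_mem_erase he')
          · rw [hstar, hstarx, zero_add]
      _ = FFh EH y := by rw [FFh, ← Finset.add_sum_erase _ _ hestar]; ring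
  have hynorm : ∑ i, y i ^ k = 1 + p * ε ^ k := by
    have hsplit : ∀ i : Fin n, y i ^ k = x i ^ k + (if i ∈ Z then ε ^ k else 0) := by
      intro i
      rw [hy]; dsimp only
      by_cases hi : i ∈ Z
      · rw [if_pos hi, if_pos hi, (Finset.mem_filter.1 hi).2, zero_pow (by omega : k ≠ 0),
          zero_add]
      · rw [if_neg hi, if_neg hi, add_zero]
    rw [Finset.sum_congr rfl fun i _ => hsplit i, Finset.sum_add_distrib, hnorm]
    congr 1
    rw [Finset.sum_ite_mem, Finset.univ_inter, Finset.sum_const, hp, nsmul_eq_mul]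
  have hray := hmax y hynn
  rw [hynorm] at hray
  have h1 : ε ^ p * C ≤ M * (p * ε ^ k) := by nlinarith [hFy, hray]
  have hεk : ε ^ k ≤ ε ^ (p+1) := pow_le_pow_of_le_one hε0.le hε1 hpk
  have h2 : ε ^ p * C ≤ M * p * (ε ^ p * ε) := by
    calc ε ^ p * C ≤ M * (p * ε ^ k) := h1
    _ ≤ M * (p * ε ^ (p+1)) := by
        apply mul_le_mul_of_nonneg_left _ (le_of_lt (lt_of_lt_of_le hMpos (le_refl M)))
        apply mul_le_mul_of_nonneg_left hεk (Nat.cast_nonneg _)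
    _ = M * p * (ε ^ p * ε) := by rw [pow_succ]; ring
  have hεp : 0 < ε ^ p := pow_pos hε0 p
  have h3 : C ≤ M * p * ε := by
    have := (mul_le_mul_iff_right₀ hεp).1 (by nlinarith [h2] : ε ^ p * C ≤ ε ^ p * (M * p * ε))
    linarith
  have h4 : M * p * ε ≤ (M * p + 1) * (C / (2 * (M * p + 1))) := by
    have hε2 : ε ≤ C / (2 * (M * p + 1)) := min_le_right _ _
    exact mul_le_mul (by linarith) hε2 hε0.le hMp.le
  have hne : (M * (p:ℝ) + 1) ≠ 0 := ne_of_gt hMp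
  have h5 : (M * (p:ℝ) + 1) * (C / (2 * (M * (p:ℝ) + 1))) = C / 2 := by
    field_simp
  linarith [h3, h4, hCpos]

lemma root_le (A B g t : ℝ) (hA : 0 ≤ A) (hB : 0 ≤ B) (hg : 0 ≤ g)
    (htA : A < t) (htB : B < t) (hq : g^2 * t ≤ (t - A) * (t - B)) :
    (A + B + g^2 + Real.sqrt ((A - B)^2 + g^4 + 2*(A + B)*g^2)) / 2 ≤ t := by
  set D : ℝ := (A - B)^2 + g^4 + 2*(A + B)*g^2 with hD
  have hD0 : 0 ≤ D := by positivity
  set B' : ℝ := A + B + g^2 with hB'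
  have hDid : D = B'^2 - 4*A*B := by rw [hD, hB']; ring
  have hq2 : 0 ≤ t^2 - B'*t + A*B := by nlinarith [hq]
  have habs : Real.sqrt D ≤ |2*t - B'| := by
    have h1 : D ≤ (2*t - B')^2 := by nlinarith [hq2]
    calc Real.sqrt D ≤ Real.sqrt ((2*t - B')^2) := Real.sqrt_le_sqrt h1
    _ = |2*t - B'| := Real.sqrt_sq_eq_abs _
  have hkey : B' - 2*A ≤ Real.sqrt D := by
    rcases le_or_gt (B' - 2*A) 0 with h | h
    · exact le_trans h (Real.sqrt_nonneg D)
    · have h1 : (B' - 2*A)^2 ≤ D := by nlinarith [mul_nonneg hA (sq_nonneg g)]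
      calc B' - 2*A = Real.sqrt ((B' - 2*A)^2) := (Real.sqrt_sq h.le).symm
      _ ≤ Real.sqrt D := Real.sqrt_le_sqrt h1
  rcases abs_cases (2*t - B') with ⟨heq, _⟩ | ⟨heq, _⟩
  · rw [heq] at habs
    linarith
  · rw [heq] at habs
    exfalso
    linarith
theorem stmt8 (n k : ℕ) (hk : 2 ≤ k) (hkn : k ≤ n)
    (E : Finset (Finset (Fin n))) (hcard : ∀ e ∈ E, e.card = k)
    (u v : Fin n) (Δ δ γ : ℕ)
    (hdu : hDeg n E u = Δ) (hΔ1 : 1 ≤ Δ) (hΔmax : ∀ w : Fin n, hDeg n E w ≤ Δ)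
    (hvu : v ≠ u) (hnbr : ∃ e ∈ E, u ∈ e ∧ v ∈ e)
    (hdv : hDeg n E v = δ)
    (hδmax : ∀ w : Fin n, w ≠ u → (∃ e ∈ E, u ∈ e ∧ w ∈ e) → hDeg n E w ≤ δ)
    (hγ : (E.filter (fun e => u ∈ e ∧ v ∈ e)).card = γ) :
    (((Δ : ℝ) + δ - 2*γ + γ^2 +
        Real.sqrt (((Δ : ℝ) - δ)^2 + (γ : ℝ)^4 + 2*((Δ : ℝ) + δ - 2*γ)*γ^2)) / 2)
        ^ ((1 : ℝ)/k)
      ≤ specRad n k (adjT n k E) := by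
  classical
  have hn1 : 1 ≤ n := le_trans (by omega : 1 ≤ k) hkn
  obtain ⟨e₀, he₀E, he₀u, he₀v⟩ := hnbr
  have hγ1 : 1 ≤ γ := by
    rw [← hγ]
    exact Finset.card_pos.2 ⟨e₀, Finset.mem_filter.2 ⟨he₀E, he₀u, he₀v⟩⟩
  have hγδ : γ ≤ δ := by
    rw [← hγ, ← hdv, hDeg]
    apply Finset.card_le_card
    intro e he
    rw [Finset.mem_filter] at he ⊢
    exact ⟨he.1, he.2.2⟩
  have hγΔ : γ ≤ Δ := by
    rw [← hγ, ← hdu, hDeg]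
    apply Finset.card_le_card
    intro e he
    rw [Finset.mem_filter] at he ⊢
    exact ⟨he.1, he.2.1⟩
  have hδΔ : δ ≤ Δ := by rw [← hdv]; exact hΔmax v
  set EH := E.filter (fun e => u ∈ e ∨ v ∈ e) with hEH
  have hEHsub : EH ⊆ E := Finset.filter_subset _ _
  have hcardH : ∀ e ∈ EH, e.card = k := fun e he => hcard e (hEHsub he)
  have he₀H : e₀ ∈ EH := Finset.mem_filter.2 ⟨he₀E, Or.inl he₀u⟩
  obtain ⟨x, hx, hnorm, hmax⟩ := exists_maximizer (by omega) hn1 EH hcardH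
  set M := FFh EH x with hM
  set lam := (k:ℝ) * M with hlam
  have heig : ∀ i, SSh EH i x = lam * x i ^ (k-1) := eigen_of_max hk EH x hx hnorm hmax
  have hk0R : (0:ℝ) < (k:ℝ) := by exact_mod_cast (by omega : 0 < k)
  -- M ≥ 1/k
  have hMk : (k:ℝ)⁻¹ ≤ M := by
    set c : ℝ := ((k:ℝ)⁻¹) ^ ((1:ℝ)/k) with hc
    have hcpos : 0 < c := Real.rpow_pos_of_pos (by positivity) _
    have hck : c ^ k = (k:ℝ)⁻¹ := by
      rw [hc, ← Real.rpow_natCast (((k:ℝ)⁻¹) ^ ((1:ℝ)/k)) k, ← Real.rpow_mul (by positivity)]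
      rw [one_div, inv_mul_cancel₀ (ne_of_gt hk0R), Real.rpow_one]
    set y : Fin n → ℝ := fun j => if j ∈ e₀ then c else 0 with hy
    have hynn : ∀ j, 0 ≤ y j := by
      intro j; rw [hy]; dsimp only; split
      · exact hcpos.le
      · exact le_refl _
    have hsum : ∑ i, y i ^ k = 1 := by
      have hsp : ∀ i : Fin n, y i ^ k = if i ∈ e₀ then c ^ k else 0 := by
        intro i; rw [hy]; dsimp only
        split
        · rfl
        · exact zero_pow (by omega)
      rw [Finset.sum_congr rfl fun i _ => hsp i, Finset.sum_ite_mem, Finset.univ_inter,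
        Finset.sum_const, hcard e₀ he₀E, hck, nsmul_eq_mul]
      field_simp
    have h1 : c ^ k ≤ FFh EH y := by
      have hpr : ∏ j ∈ e₀, y j = c ^ k := by
        have hcst : ∀ j ∈ e₀, y j = c := fun j hj => by simp only [hy, if_pos hj]
        rw [Finset.prod_congr rfl hcst, Finset.prod_const, hcardH e₀ he₀H]
      rw [← hpr, FFh]
      exact Finset.single_le_sum (f := fun e => ∏ j ∈ e, y j)
        (fun e' _ => Finset.prod_nonneg fun j _ => hynn j) he₀H
    have h2 := hmax y hynn
    rw [hsum, mul_one] at h2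
    calc (k:ℝ)⁻¹ = c ^ k := hck.symm
    _ ≤ FFh EH y := h1
    _ ≤ M := h2
  have hMpos : 0 < M := lt_of_lt_of_le (by positivity) hMk
  have hlampos : 0 < lam := by rw [hlam]; positivity
  have hlamk1 : 0 < lam ^ (k-1) := pow_pos hlampos _
  -- positivity on V(H)
  have hposall : ∀ w : Fin n, ∀ e ∈ EH, w ∈ e → 0 < x w :=
    maximizer_pos hk EH hcardH x hx hnorm hmax u v
      ⟨e₀, he₀H, he₀u, he₀v⟩ (fun e he => (Finset.mem_filter.1 he).2) hMpos
  have ha : 0 < x u := hposall u e₀ he₀H he₀u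
  have hb : 0 < x v := hposall v e₀ he₀H he₀v
  set a := x u with had
  set b := x v with hbd
  -- generic edge bound
  have hedge : ∀ e ∈ EH, ∀ w ∈ e, ∏ j ∈ e, x j ≤ lam * x w ^ k := by
    intro e he w hwe
    have hmem : e ∈ EH.filter (fun e => w ∈ e) := Finset.mem_filter.2 ⟨he, hwe⟩
    have h1 : ∏ j ∈ e.erase w, x j ≤ SSh EH w x := by
      rw [SSh]
      exact Finset.single_le_sum (f := fun e => ∏ j ∈ e.erase w, x j)
        (fun e' _ => Finset.prod_nonneg fun j _ => hx j) hmem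
    rw [heig w] at h1
    have hpows : x w * x w ^ (k-1) = x w ^ k := by
      rw [← pow_succ']
      congr 1
      omega
    calc ∏ j ∈ e, x j = x w * ∏ j ∈ e.erase w, x j := (Finset.mul_prod_erase e x hwe).symm
    _ ≤ x w * (lam * x w ^ (k-1)) := mul_le_mul_of_nonneg_left h1 (hx w)
    _ = lam * x w ^ k := by rw [← hpows]; ring
  -- edge families
  set Sh := E.filter (fun e => u ∈ e ∧ v ∈ e) with hSh
  set UO := E.filter (fun e => u ∈ e ∧ v ∉ e) with hUO
  set VO := E.filter (fun e => v ∈ e ∧ u ∉ e) with hVO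
  have hShH : ∀ e ∈ Sh, e ∈ EH := by
    intro e he; rw [hSh, Finset.mem_filter] at he
    exact Finset.mem_filter.2 ⟨he.1, Or.inl he.2.1⟩
  have hUOH : ∀ e ∈ UO, e ∈ EH := by
    intro e he; rw [hUO, Finset.mem_filter] at he
    exact Finset.mem_filter.2 ⟨he.1, Or.inl he.2.1⟩
  have hVOH : ∀ e ∈ VO, e ∈ EH := by
    intro e he; rw [hVO, Finset.mem_filter] at he
    exact Finset.mem_filter.2 ⟨he.1, Or.inr he.2.1⟩
  have hEHu : EH.filter (fun e => u ∈ e) = E.filter (fun e => u ∈ e) := by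
    rw [hEH, Finset.filter_filter]
    ext e
    simp only [Finset.mem_filter]
    tauto
  have hEHv : EH.filter (fun e => v ∈ e) = E.filter (fun e => v ∈ e) := by
    rw [hEH, Finset.filter_filter]
    ext e
    simp only [Finset.mem_filter]
    tauto
  have hsplitu : E.filter (fun e => u ∈ e) = Sh ∪ UO := by
    rw [hSh, hUO]; ext e
    simp only [Finset.mem_filter, Finset.mem_union]
    tauto
  have hsplitv : E.filter (fun e => v ∈ e) = Sh ∪ VO := by
    rw [hSh, hVO]; ext e
    simp only [Finset.mem_filter, Finset.mem_union]
    tauto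
  have hdisju : Disjoint Sh UO := by
    rw [Finset.disjoint_left]
    intro e he1 he2
    rw [hSh, Finset.mem_filter] at he1
    rw [hUO, Finset.mem_filter] at he2
    exact he2.2.2 he1.2.2
  have hdisjv : Disjoint Sh VO := by
    rw [Finset.disjoint_left]
    intro e he1 he2
    rw [hSh, Finset.mem_filter] at he1
    rw [hVO, Finset.mem_filter] at he2
    exact he2.2.2 he1.2.1
  have hShcard : Sh.card = γ := hγ
  have hUOcard : (UO.card : ℝ) = (Δ:ℝ) - γ := by
    have h1 : (E.filter (fun e => u ∈ e)).card = Sh.card + UO.card := by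
      rw [hsplitu, Finset.card_union_of_disjoint hdisju]
    rw [hDeg] at hdu
    rw [hdu, hShcard] at h1
    have : UO.card = Δ - γ := by omega
    rw [this, Nat.cast_sub hγΔ]
  have hVOcard : (VO.card : ℝ) = (δ:ℝ) - γ := by
    have h1 : (E.filter (fun e => v ∈ e)).card = Sh.card + VO.card := by
      rw [hsplitv, Finset.card_union_of_disjoint hdisjv]
    rw [hDeg] at hdv
    rw [hdv, hShcard] at h1
    have : VO.card = δ - γ := by omega
    rw [this, Nat.cast_sub hγδ]
  -- r
  set r := Real.sqrt ((a*b)^(k-2) / lam^(k-2)) with hr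
  have hrpos : 0 < r := Real.sqrt_pos.2 (by positivity)
  have hr2 : r^2 = (a*b)^(k-2) / lam^(k-2) := Real.sq_sqrt (by positivity)
  -- B1 : u-only edges
  have hB1 : ∀ e ∈ UO, a^(k-1) / lam^(k-1) ≤ ∏ j ∈ e.erase u, x j := by
    intro e he
    have heH : e ∈ EH := hUOH e he
    have hue : u ∈ e := (Finset.mem_filter.1 he).2.1
    set P := ∏ j ∈ e.erase u, x j with hP
    have hPpos : 0 < P :=
      Finset.prod_pos fun j hj => hposall j e heH (Finset.mem_of_mem_erase hj)
    have hcarde : (e.erase u).card = k - 1 := by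
      rw [Finset.card_erase_of_mem hue, hcardH e heH]
    have hmul : ∏ w ∈ e.erase u, (∏ j ∈ e, x j) ≤ ∏ w ∈ e.erase u, (lam * x w ^ k) :=
      Finset.prod_le_prod (fun w _ => Finset.prod_nonneg fun j _ => hx j)
        (fun w hw => hedge e heH w (Finset.mem_of_mem_erase hw))
    have hL : ∏ w ∈ e.erase u, (∏ j ∈ e, x j) = (a * P)^(k-1) := by
      rw [Finset.prod_const, hcarde, ← Finset.mul_prod_erase e x hue]
    have hR : ∏ w ∈ e.erase u, (lam * x w ^ k) = lam^(k-1) * P^k := by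
      rw [Finset.prod_mul_distrib, Finset.prod_const, hcarde, Finset.prod_pow]
    rw [hL, hR] at hmul
    have hPk : P^k = P^(k-1) * P := by
      rw [← pow_succ]
      congr 1
      omega
    rw [hPk, mul_pow] at hmul
    have hPk1 : 0 < P^(k-1) := pow_pos hPpos _
    have h2 : a^(k-1) ≤ lam^(k-1) * P := by
      have h3 : a^(k-1) * P^(k-1) ≤ lam^(k-1) * P * P^(k-1) := by
        calc a^(k-1) * P^(k-1) = a^(k-1) * P^(k-1) := rfl
        _ ≤ lam^(k-1) * (P^(k-1) * P) := hmul
        _ = lam^(k-1) * P * P^(k-1) := by ring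
      exact le_of_mul_le_mul_right h3 hPk1
    rw [div_le_iff₀ hlamk1]
    linarith [h2]
  -- B2 : shared edges
  have hB2 : ∀ e ∈ Sh, b * r ≤ ∏ j ∈ e.erase u, x j ∧ a * r ≤ ∏ j ∈ e.erase v, x j := by
    intro e he
    have heH : e ∈ EH := hShH e he
    have hue : u ∈ e := (Finset.mem_filter.1 he).2.1
    have hve : v ∈ e := (Finset.mem_filter.1 he).2.2
    have hvin : v ∈ e.erase u := Finset.mem_erase.2 ⟨hvu, hve⟩
    have huin : u ∈ e.erase v := Finset.mem_erase.2 ⟨fun h => hvu h.symm, hue⟩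
    set s := (e.erase u).erase v with hsdef
    set R := ∏ j ∈ s, x j with hR
    have hRpos : 0 < R :=
      Finset.prod_pos fun j hj => hposall j e heH
        (Finset.mem_of_mem_erase (Finset.mem_of_mem_erase hj))
    have hcards : s.card = k - 2 := by
      rw [hsdef, Finset.card_erase_of_mem hvin, Finset.card_erase_of_mem hue, hcardH e heH]
      omega
    have hprodu : ∏ j ∈ e.erase u, x j = b * R := by
      rw [hR, hsdef, ← Finset.mul_prod_erase _ x hvin]
    have hprodv : ∏ j ∈ e.erase v, x j = a * R := by
      have hcomm : (e.erase v).erase u = s := by rw [hsdef, Finset.erase_right_comm]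
      rw [hR, ← hcomm, ← Finset.mul_prod_erase _ x huin]
    have hprode : ∏ j ∈ e, x j = a * (b * R) := by
      rw [← Finset.mul_prod_erase e x hue, hprodu]
    have hmul : ∏ w ∈ s, (∏ j ∈ e, x j) ≤ ∏ w ∈ s, (lam * x w ^ k) :=
      Finset.prod_le_prod (fun w _ => Finset.prod_nonneg fun j _ => hx j)
        (fun w hw => hedge e heH w
          (Finset.mem_of_mem_erase (Finset.mem_of_mem_erase hw)))
    have hL : ∏ w ∈ s, (∏ j ∈ e, x j) = (a * (b * R))^(k-2) := by
      rw [Finset.prod_const, hcards, hprode]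
    have hR' : ∏ w ∈ s, (lam * x w ^ k) = lam^(k-2) * R^k := by
      rw [Finset.prod_mul_distrib, Finset.prod_const, hcards, Finset.prod_pow]
    rw [hL, hR'] at hmul
    have hRk : R^k = R^(k-2) * R^2 := by
      rw [← pow_add]
      congr 1
      omega
    rw [hRk] at hmul
    have hRk2 : 0 < R^(k-2) := pow_pos hRpos _
    have h2 : (a*b)^(k-2) ≤ lam^(k-2) * R^2 := by
      have h3 : (a*b)^(k-2) * R^(k-2) ≤ lam^(k-2) * R^2 * R^(k-2) := by
        calc (a*b)^(k-2) * R^(k-2) = (a * (b * R))^(k-2) := by rw [← mul_pow]; ring_nf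
        _ ≤ lam^(k-2) * (R^(k-2) * R^2) := hmul
        _ = lam^(k-2) * R^2 * R^(k-2) := by ring
      exact le_of_mul_le_mul_right h3 hRk2
    have hrR : r ≤ R := by
      have h4 : r^2 ≤ R^2 := by
        rw [hr2, div_le_iff₀ (by positivity : (0:ℝ) < lam^(k-2))]
        linarith [h2]
      calc r = Real.sqrt (r^2) := (Real.sqrt_sq hrpos.le).symm
      _ ≤ Real.sqrt (R^2) := Real.sqrt_le_sqrt h4
      _ = R := Real.sqrt_sq hRpos.le
    constructor
    · rw [hprodu]
      exact mul_le_mul_of_nonneg_left hrR hb.le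
    · rw [hprodv]
      exact mul_le_mul_of_nonneg_left hrR ha.le
  -- equation at u and v with lower bounds
  have hequ : lam * a^(k-1) = (∑ e ∈ Sh, ∏ j ∈ e.erase u, x j)
      + ∑ e ∈ UO, ∏ j ∈ e.erase u, x j := by
    rw [← heig u, SSh, hEHu, hsplitu, Finset.sum_union hdisju]
  have heqv : lam * b^(k-1) = (∑ e ∈ Sh, ∏ j ∈ e.erase v, x j)
      + ∑ e ∈ VO, ∏ j ∈ e.erase v, x j := by
    rw [← heig v, SSh, hEHv, hsplitv, Finset.sum_union hdisjv]
  have hsumShu : (γ:ℝ) * (b * r) ≤ ∑ e ∈ Sh, ∏ j ∈ e.erase u, x j := by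
    have := Finset.card_nsmul_le_sum Sh (fun e => ∏ j ∈ e.erase u, x j) (b*r)
      (fun e he => (hB2 e he).1)
    rwa [hShcard, nsmul_eq_mul] at this
  have hsumShv : (γ:ℝ) * (a * r) ≤ ∑ e ∈ Sh, ∏ j ∈ e.erase v, x j := by
    have := Finset.card_nsmul_le_sum Sh (fun e => ∏ j ∈ e.erase v, x j) (a*r)
      (fun e he => (hB2 e he).2)
    rwa [hShcard, nsmul_eq_mul] at this
  have hsumUO : ((Δ:ℝ) - γ) * (a^(k-1)/lam^(k-1)) ≤ ∑ e ∈ UO, ∏ j ∈ e.erase u, x j := by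
    have := Finset.card_nsmul_le_sum UO (fun e => ∏ j ∈ e.erase u, x j)
      (a^(k-1)/lam^(k-1)) (fun e he => hB1 e he)
    rwa [nsmul_eq_mul, hUOcard] at this
  have hB1v : ∀ e ∈ VO, b^(k-1) / lam^(k-1) ≤ ∏ j ∈ e.erase v, x j := by
    intro e he
    have heH : e ∈ EH := hVOH e he
    have hve : v ∈ e := (Finset.mem_filter.1 he).2.1
    set P := ∏ j ∈ e.erase v, x j with hP
    have hPpos : 0 < P :=
      Finset.prod_pos fun j hj => hposall j e heH (Finset.mem_of_mem_erase hj)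
    have hcarde : (e.erase v).card = k - 1 := by
      rw [Finset.card_erase_of_mem hve, hcardH e heH]
    have hmul : ∏ w ∈ e.erase v, (∏ j ∈ e, x j) ≤ ∏ w ∈ e.erase v, (lam * x w ^ k) :=
      Finset.prod_le_prod (fun w _ => Finset.prod_nonneg fun j _ => hx j)
        (fun w hw => hedge e heH w (Finset.mem_of_mem_erase hw))
    have hL : ∏ w ∈ e.erase v, (∏ j ∈ e, x j) = (b * P)^(k-1) := by
      rw [Finset.prod_const, hcarde, ← Finset.mul_prod_erase e x hve]
    have hRR : ∏ w ∈ e.erase v, (lam * x w ^ k) = lam^(k-1) * P^k := by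
      rw [Finset.prod_mul_distrib, Finset.prod_const, hcarde, Finset.prod_pow]
    rw [hL, hRR] at hmul
    have hPk : P^k = P^(k-1) * P := by
      rw [← pow_succ]; congr 1; omega
    rw [hPk, mul_pow] at hmul
    have hPk1 : 0 < P^(k-1) := pow_pos hPpos _
    have h2 : b^(k-1) ≤ lam^(k-1) * P := by
      have h3 : b^(k-1) * P^(k-1) ≤ lam^(k-1) * P * P^(k-1) := by
        calc b^(k-1) * P^(k-1) ≤ lam^(k-1) * (P^(k-1) * P) := hmul
        _ = lam^(k-1) * P * P^(k-1) := by ring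
      exact le_of_mul_le_mul_right h3 hPk1
    rw [div_le_iff₀ hlamk1]
    linarith [h2]
  have hsumVO : ((δ:ℝ) - γ) * (b^(k-1)/lam^(k-1)) ≤ ∑ e ∈ VO, ∏ j ∈ e.erase v, x j := by
    have := Finset.card_nsmul_le_sum VO (fun e => ∏ j ∈ e.erase v, x j)
      (b^(k-1)/lam^(k-1)) (fun e he => hB1v e he)
    rwa [nsmul_eq_mul, hVOcard] at this
  -- combined inequalities
  set t := lam ^ k with ht
  have htpos : 0 < t := pow_pos hlampos k
  have hlamsplit : lam * lam^(k-1) = t := by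
    rw [ht, ← pow_succ']
    congr 1
    omega
  have hAcast : (0:ℝ) ≤ (Δ:ℝ) - γ := sub_nonneg.2 (Nat.cast_le.2 hγΔ)
  have hBcast : (0:ℝ) ≤ (δ:ℝ) - γ := sub_nonneg.2 (Nat.cast_le.2 hγδ)
  have h1 : (γ:ℝ) * b * r * lam^(k-1) ≤ (t - ((Δ:ℝ) - γ)) * a^(k-1) := by
    have hineq : (γ:ℝ) * (b * r) + ((Δ:ℝ) - γ) * (a^(k-1)/lam^(k-1)) ≤ lam * a^(k-1) := by
      rw [hequ]; exact add_le_add hsumShu hsumUO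
    have hmm := mul_le_mul_of_nonneg_right hineq hlamk1.le
    have hdiv : ((Δ:ℝ) - γ) * (a^(k-1)/lam^(k-1)) * lam^(k-1) = ((Δ:ℝ) - γ) * a^(k-1) := by
      field_simp
    have hrhs : lam * a^(k-1) * lam^(k-1) = t * a^(k-1) := by
      rw [← hlamsplit]; ring
    rw [add_mul, hdiv, hrhs] at hmm
    ring_nf at hmm ⊢
    linarith [hmm]
  have h2 : (γ:ℝ) * a * r * lam^(k-1) ≤ (t - ((δ:ℝ) - γ)) * b^(k-1) := by
    have hineq : (γ:ℝ) * (a * r) + ((δ:ℝ) - γ) * (b^(k-1)/lam^(k-1)) ≤ lam * b^(k-1) := by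
      rw [heqv]; exact add_le_add hsumShv hsumVO
    have hmm := mul_le_mul_of_nonneg_right hineq hlamk1.le
    have hdiv : ((δ:ℝ) - γ) * (b^(k-1)/lam^(k-1)) * lam^(k-1) = ((δ:ℝ) - γ) * b^(k-1) := by
      field_simp
    have hrhs : lam * b^(k-1) * lam^(k-1) = t * b^(k-1) := by
      rw [← hlamsplit]; ring
    rw [add_mul, hdiv, hrhs] at hmm
    ring_nf at hmm ⊢
    linarith [hmm]
  have hγR : (0:ℝ) < (γ:ℝ) := by exact_mod_cast (by omega : 0 < γ)
  have hlhs1pos : 0 < (γ:ℝ) * b * r * lam^(k-1) := by positivity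
  have hlhs2pos : 0 < (γ:ℝ) * a * r * lam^(k-1) := by positivity
  have hak1 : 0 < a^(k-1) := pow_pos ha _
  have hbk1 : 0 < b^(k-1) := pow_pos hb _
  have htA : (Δ:ℝ) - γ < t := by
    by_contra h
    push_neg at h
    have : (t - ((Δ:ℝ) - γ)) * a^(k-1) ≤ 0 :=
      mul_nonpos_of_nonpos_of_nonneg (by linarith) hak1.le
    linarith
  have htB : (δ:ℝ) - γ < t := by
    by_contra h
    push_neg at h
    have : (t - ((δ:ℝ) - γ)) * b^(k-1) ≤ 0 :=
      mul_nonpos_of_nonpos_of_nonneg (by linarith) hbk1.le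
    linarith
  -- multiply the two inequalities
  have hq : (γ:ℝ)^2 * t ≤ (t - ((Δ:ℝ) - γ)) * (t - ((δ:ℝ) - γ)) := by
    have hm : ((γ:ℝ) * b * r * lam^(k-1)) * ((γ:ℝ) * a * r * lam^(k-1))
        ≤ ((t - ((Δ:ℝ) - γ)) * a^(k-1)) * ((t - ((δ:ℝ) - γ)) * b^(k-1)) :=
      mul_le_mul h1 h2 hlhs2pos.le (le_trans hlhs1pos.le h1)
    have hlamne : lam^(k-2) ≠ 0 := ne_of_gt (pow_pos hlampos _)
    have hlhs : ((γ:ℝ) * b * r * lam^(k-1)) * ((γ:ℝ) * a * r * lam^(k-1))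
        = (γ:ℝ)^2 * t * (a*b)^(k-1) := by
      have hpowsplit : lam^(k-1) * lam^(k-1) = lam^(k-2) * t := by
        rw [ht, ← pow_add, ← pow_add]
        congr 1
        omega
      have habk : (a*b) * (a*b)^(k-2) = (a*b)^(k-1) := by
        rw [← pow_succ']
        congr 1
        omega
      calc ((γ:ℝ) * b * r * lam^(k-1)) * ((γ:ℝ) * a * r * lam^(k-1))
          = (γ:ℝ)^2 * (a*b) * r^2 * (lam^(k-1) * lam^(k-1)) := by ring
        _ = (γ:ℝ)^2 * (a*b) * ((a*b)^(k-2) / lam^(k-2)) * (lam^(k-2) * t) := by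
            rw [hr2, hpowsplit]
        _ = (γ:ℝ)^2 * t * ((a*b) * (a*b)^(k-2)) := by
            field_simp
        _ = (γ:ℝ)^2 * t * (a*b)^(k-1) := by rw [habk]
    have hrhs : ((t - ((Δ:ℝ) - γ)) * a^(k-1)) * ((t - ((δ:ℝ) - γ)) * b^(k-1))
        = (t - ((Δ:ℝ) - γ)) * (t - ((δ:ℝ) - γ)) * (a*b)^(k-1) := by
      rw [mul_pow]; ring
    rw [hlhs, hrhs] at hm
    exact le_of_mul_le_mul_right hm (by positivity)
  -- apply the root lemma
  have hroot := root_le ((Δ:ℝ) - γ) ((δ:ℝ) - γ) (γ:ℝ) t hAcast hBcast hγR.le htA htB hq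
  have hmatch : ((Δ:ℝ) + δ - 2*γ + γ^2 +
      Real.sqrt (((Δ:ℝ) - δ)^2 + (γ:ℝ)^4 + 2*((Δ:ℝ) + δ - 2*γ)*γ^2)) / 2
      = (((Δ:ℝ) - γ) + ((δ:ℝ) - γ) + (γ:ℝ)^2 +
        Real.sqrt (((((Δ:ℝ) - γ)) - ((δ:ℝ) - γ))^2 + (γ:ℝ)^4
          + 2*(((Δ:ℝ) - γ) + ((δ:ℝ) - γ))*(γ:ℝ)^2)) / 2 := by
    have harg : ((Δ:ℝ) - δ)^2 + (γ:ℝ)^4 + 2*((Δ:ℝ) + δ - 2*γ)*γ^2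
        = ((((Δ:ℝ) - γ)) - ((δ:ℝ) - γ))^2 + (γ:ℝ)^4
          + 2*(((Δ:ℝ) - γ) + ((δ:ℝ) - γ))*(γ:ℝ)^2 := by ring
    rw [harg]
    ring
  rw [hmatch]
  have hW0 : 0 ≤ (((Δ:ℝ) - γ) + ((δ:ℝ) - γ) + (γ:ℝ)^2 +
      Real.sqrt (((((Δ:ℝ) - γ)) - ((δ:ℝ) - γ))^2 + (γ:ℝ)^4
        + 2*(((Δ:ℝ) - γ) + ((δ:ℝ) - γ))*(γ:ℝ)^2)) / 2 := by
    have := Real.sqrt_nonneg (((((Δ:ℝ) - γ)) - ((δ:ℝ) - γ))^2 + (γ:ℝ)^4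
      + 2*(((Δ:ℝ) - γ) + ((δ:ℝ) - γ))*(γ:ℝ)^2)
    have hg2 : (0:ℝ) ≤ (γ:ℝ)^2 := sq_nonneg _
    linarith
  calc ((((Δ:ℝ) - γ) + ((δ:ℝ) - γ) + (γ:ℝ)^2 +
      Real.sqrt (((((Δ:ℝ) - γ)) - ((δ:ℝ) - γ))^2 + (γ:ℝ)^4
        + 2*(((Δ:ℝ) - γ) + ((δ:ℝ) - γ))*(γ:ℝ)^2)) / 2) ^ ((1:ℝ)/k)
      ≤ t ^ ((1:ℝ)/k) := by
        exact Real.rpow_le_rpow hW0 hroot (by positivity)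
    _ = lam := by
        rw [ht, ← Real.rpow_natCast lam k, ← Real.rpow_mul hlampos.le]
        rw [mul_one_div, div_self (ne_of_gt hk0R), Real.rpow_one]
    _ ≤ specRad n k (adjT n k E) := by
        obtain ⟨xG, hxG, hnormG, hmaxG⟩ := exists_maximizer (by omega) hn1 E hcard
        have hsub : FFh EH x ≤ FFh E x :=
          Finset.sum_le_sum_of_subset_of_nonneg hEHsub
            (fun e _ _ => Finset.prod_nonneg fun j _ => hx j)
        have hGx := hmaxG x hx
        rw [hnorm, mul_one] at hGx
        have hMG : M ≤ FFh E xG := le_trans hsub hGx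
        have hfin := max_le_specRad hk E hcard xG hxG hnormG hmaxG
        calc lam = (k:ℝ) * M := hlam
        _ ≤ (k:ℝ) * FFh E xG := mul_le_mul_of_nonneg_left hMG hk0R.le
        _ ≤ specRad n k (adjT n k E) := hfin
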